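/- Let K be a compact Hausdorff space and H ⊆ C(K, K_C) nonempty. If φ, ψ ∈ Conv(H), then the pointwise maximum φ ∨ ψ lies in the uniform closure of Conv(H) in C(K,[0,1]). -/

import Mathlib

/-- The space `K_C` of nonempty compact intervals of `ℝ`, given by endpoints. -/
structure KC where
  lo : ℝ
  hi : ℝ
  isLe : lo ≤ hi

namespace KC

@[ext] theorem ext' {A B : KC} (h1 : A.lo = B.lo) (h2 : A.hi = B.hi) : A = B := by
  cases A; cases B; simp_all

/-- Minkowski addition. -/
instance : Add KC := ⟨fun A B => ⟨A.lo + B.lo, A.hi + B.hi, add_le_add A.isLe B.isLe⟩⟩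

instance : Zero KC := ⟨⟨0, 0, le_refl 0⟩⟩

/-- Scalar multiplication `λ·[a,b] = {λx : x ∈ [a,b]}`. -/
noncomputable instance : SMul ℝ KC :=
  ⟨fun c A => ⟨min (c * A.lo) (c * A.hi), max (c * A.lo) (c * A.hi), min_le_max⟩⟩

noncomputable instance : AddCommMonoid KC where
  add_assoc A B C := by ext <;> exact add_assoc _ _ _
  zero_add A := by ext <;> exact zero_add _
  add_zero A := by ext <;> exact add_zero _
  add_comm A B := by ext <;> exact add_comm _ _
  nsmul := nsmulRec

/-- The Hausdorff metric on `K_C`: `d_H([a,b],[c,d]) = max {|a-c|, |b-d|}`. -/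
noncomputable instance : MetricSpace KC where
  dist A B := max |A.lo - B.lo| |A.hi - B.hi|
  dist_self A := by simp
  dist_comm A B := by simp [abs_sub_comm]
  dist_triangle A B C := by
    apply max_le
    · calc |A.lo - C.lo| ≤ |A.lo - B.lo| + |B.lo - C.lo| := abs_sub_le _ _ _
        _ ≤ _ := add_le_add (le_max_left _ _) (le_max_left _ _)
    · calc |A.hi - C.hi| ≤ |A.hi - B.hi| + |B.hi - C.hi| := abs_sub_le _ _ _
        _ ≤ _ := add_le_add (le_max_right _ _) (le_max_right _ _)
  eq_of_dist_eq_zero := by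
    intro A B h
    have h1 : |A.lo - B.lo| = 0 :=
      le_antisymm (le_of_le_of_eq (le_max_left _ _) h) (abs_nonneg _)
    have h2 : |A.hi - B.hi| = 0 :=
      le_antisymm (le_of_le_of_eq (le_max_right _ _) h) (abs_nonneg _)
    ext
    · linarith [abs_eq_zero.mp h1]
    · linarith [abs_eq_zero.mp h2]

/-- The generalized Hukuhara difference. -/
noncomputable def gH (A B : KC) : KC :=
  ⟨min (A.lo - B.lo) (A.hi - B.hi), max (A.lo - B.lo) (A.hi - B.hi), min_le_max⟩

/-- The length (diameter) of an interval. -/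
def len (A : KC) : ℝ := A.hi - A.lo

end KC

/-- `Conv H`: continuous `[0,1]`-valued functions `φ` with `φf + (1-φ)g ∈ H` for all `f,g ∈ H`. -/
def Conv {K : Type*} [TopologicalSpace K] (H : Set C(K, KC)) : Set C(K, ℝ) :=
  {φ | (∀ k, φ k ∈ Set.Icc (0:ℝ) 1) ∧
    ∀ f ∈ H, ∀ g ∈ H, ∃ h ∈ H, ∀ k, h k = φ k • f k + (1 - φ k) • g k}

section ConvAux

variable {K : Type*} [TopologicalSpace K]

namespace KC

lemma smul_lo {c : ℝ} (hc : 0 ≤ c) (A : KC) : (c • A).lo = c * A.lo := by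
  show min (c * A.lo) (c * A.hi) = c * A.lo
  exact min_eq_left (by nlinarith [A.isLe])

lemma smul_hi {c : ℝ} (hc : 0 ≤ c) (A : KC) : (c • A).hi = c * A.hi := by
  show max (c * A.lo) (c * A.hi) = c * A.hi
  exact max_eq_right (by nlinarith [A.isLe])

lemma add_lo (A B : KC) : (A + B).lo = A.lo + B.lo := rfl
lemma add_hi (A B : KC) : (A + B).hi = A.hi + B.hi := rfl

lemma mix_lo {α : ℝ} (h0 : 0 ≤ α) (h1 : α ≤ 1) (F G : KC) :
    (α • F + (1 - α) • G).lo = α * F.lo + (1 - α) * G.lo := by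
  rw [add_lo, smul_lo h0, smul_lo (by linarith : (0:ℝ) ≤ 1 - α)]

lemma mix_hi {α : ℝ} (h0 : 0 ≤ α) (h1 : α ≤ 1) (F G : KC) :
    (α • F + (1 - α) • G).hi = α * F.hi + (1 - α) * G.hi := by
  rw [add_hi, smul_hi h0, smul_hi (by linarith : (0:ℝ) ≤ 1 - α)]

lemma mix_eq {α β γ : ℝ} (hα0 : 0 ≤ α) (hα1 : α ≤ 1) (hβ0 : 0 ≤ β) (hβ1 : β ≤ 1)
    (hγ0 : 0 ≤ γ) (hγ1 : γ ≤ 1) (F G : KC) :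
    α • (β • F + (1 - β) • G) + (1 - α) • (γ • F + (1 - γ) • G)
      = (α * β + (1 - α) * γ) • F + (1 - (α * β + (1 - α) * γ)) • G := by
  have hw0 : 0 ≤ α * β + (1 - α) * γ := by nlinarith
  have hw1 : α * β + (1 - α) * γ ≤ 1 := by nlinarith
  apply KC.ext'
  · rw [mix_lo hw0 hw1, mix_lo hα0 hα1, mix_lo hβ0 hβ1, mix_lo hγ0 hγ1]
    ring
  · rw [mix_hi hw0 hw1, mix_hi hα0 hα1, mix_hi hβ0 hβ1, mix_hi hγ0 hγ1]
    ring

end KC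

variable {H : Set C(K, KC)}

lemma conv_zero : (0 : C(K, ℝ)) ∈ Conv H := by
  have e : ∀ (F G : KC), (0:ℝ) • F + (1 - (0:ℝ)) • G = G := by
    intro F G
    apply KC.ext'
    · rw [KC.mix_lo le_rfl zero_le_one]; ring
    · rw [KC.mix_hi le_rfl zero_le_one]; ring
  refine ⟨fun k => by simp, fun f hf g hg => ⟨g, hg, fun k => ?_⟩⟩
  rw [ContinuousMap.zero_apply, e]

lemma conv_one : (1 : C(K, ℝ)) ∈ Conv H := by
  have e : ∀ (F G : KC), (1:ℝ) • F + (1 - (1:ℝ)) • G = F := by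
    intro F G
    apply KC.ext'
    · rw [KC.mix_lo zero_le_one le_rfl]; ring
    · rw [KC.mix_hi zero_le_one le_rfl]; ring
  refine ⟨fun k => by simp, fun f hf g hg => ⟨f, hf, fun k => ?_⟩⟩
  rw [ContinuousMap.one_apply, e]

lemma conv_mix {χ a b : C(K, ℝ)} (hχ : χ ∈ Conv H) (ha : a ∈ Conv H) (hb : b ∈ Conv H) :
    χ * a + (1 - χ) * b ∈ Conv H := by
  obtain ⟨hχr, hχc⟩ := hχ
  obtain ⟨har, hac⟩ := ha
  obtain ⟨hbr, hbc⟩ := hb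
  constructor
  · intro k
    obtain ⟨h1, h2⟩ := hχr k
    obtain ⟨h3, h4⟩ := har k
    obtain ⟨h5, h6⟩ := hbr k
    simp only [ContinuousMap.add_apply, ContinuousMap.mul_apply, ContinuousMap.sub_apply,
      ContinuousMap.one_apply, Set.mem_Icc]
    constructor <;> nlinarith
  · intro f hf g hg
    obtain ⟨ha', hamem, haeq⟩ := hac f hf g hg
    obtain ⟨hb', hbmem, hbeq⟩ := hbc f hf g hg
    obtain ⟨h, hmem, heq⟩ := hχc ha' hamem hb' hbmem
    refine ⟨h, hmem, fun k => ?_⟩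
    rw [heq k, haeq k, hbeq k]
    simp only [ContinuousMap.add_apply, ContinuousMap.mul_apply, ContinuousMap.sub_apply,
      ContinuousMap.one_apply]
    exact KC.mix_eq (hχr k).1 (hχr k).2 (har k).1 (har k).2 (hbr k).1 (hbr k).2 _ _

/-- one step of the majority iteration `c ↦ maj(φ, 1-ψ, c)`. -/
noncomputable def cstep (φ ψ c : C(K, ℝ)) : C(K, ℝ) :=
  φ * ((1 - ψ) * 1 + (1 - (1 - ψ)) * c) + (1 - φ) * ((1 - ψ) * c + (1 - (1 - ψ)) * 0)

/-- one smoothstep `c ↦ 3c² - 2c³`. -/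
noncomputable def gstep (c : C(K, ℝ)) : C(K, ℝ) :=
  c * (c * 1 + (1 - c) * c) + (1 - c) * (c * c + (1 - c) * 0)

lemma conv_compl {ψ : C(K, ℝ)} (hψ : ψ ∈ Conv H) : (1 - ψ) ∈ Conv H := by
  have e : ψ * 0 + (1 - ψ) * 1 = 1 - ψ := by
    ext k
    simp
  exact e ▸ conv_mix hψ conv_zero conv_one

lemma conv_cstep {φ ψ c : C(K, ℝ)} (hφ : φ ∈ Conv H) (hψ : ψ ∈ Conv H) (hc : c ∈ Conv H) :
    cstep φ ψ c ∈ Conv H :=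
  conv_mix hφ (conv_mix (conv_compl hψ) conv_one hc) (conv_mix (conv_compl hψ) hc conv_zero)

lemma conv_cstep_iter {φ ψ : C(K, ℝ)} (hφ : φ ∈ Conv H) (hψ : ψ ∈ Conv H) (N : ℕ) :
    (cstep φ ψ)^[N] 0 ∈ Conv H := by
  induction N with
  | zero => exact conv_zero
  | succ n ih => rw [Function.iterate_succ_apply']; exact conv_cstep hφ hψ ih

lemma conv_gstep {c : C(K, ℝ)} (hc : c ∈ Conv H) : gstep c ∈ Conv H :=
  conv_mix hc (conv_mix hc conv_one hc) (conv_mix hc hc conv_zero)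

lemma conv_gstep_iter {c : C(K, ℝ)} (hc : c ∈ Conv H) (M : ℕ) : gstep^[M] c ∈ Conv H := by
  induction M with
  | zero => exact hc
  | succ n ih => rw [Function.iterate_succ_apply']; exact conv_gstep ih

/-- real smoothstep -/
noncomputable def realg (t : ℝ) : ℝ := 3 * t ^ 2 - 2 * t ^ 3

lemma gstep_apply (c : C(K, ℝ)) (k : K) : gstep c k = realg (c k) := by
  simp only [gstep, realg, ContinuousMap.add_apply, ContinuousMap.mul_apply,
    ContinuousMap.sub_apply, ContinuousMap.one_apply, ContinuousMap.zero_apply]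
  ring

lemma gstep_iter_apply (M : ℕ) (c : C(K, ℝ)) (k : K) :
    gstep^[M] c k = realg^[M] (c k) := by
  induction M generalizing c with
  | zero => simp
  | succ n ih =>
    rw [Function.iterate_succ_apply, Function.iterate_succ_apply, ih, gstep_apply]

lemma cstep_apply (φ ψ c : C(K, ℝ)) (k : K) :
    cstep φ ψ c k = φ k * (1 - ψ k) + (φ k * ψ k + (1 - φ k) * (1 - ψ k)) * c k := by
  simp only [cstep, ContinuousMap.add_apply, ContinuousMap.mul_apply,
    ContinuousMap.sub_apply, ContinuousMap.one_apply, ContinuousMap.zero_apply]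
  ring

/-- the real affine iteration `t ↦ p + κ t` started at `0` -/
noncomputable def affIter (p κ : ℝ) : ℕ → ℝ := fun N => (fun t => p + κ * t)^[N] 0

lemma affIter_zero (p κ : ℝ) : affIter p κ 0 = 0 := rfl

lemma affIter_succ (p κ : ℝ) (N : ℕ) : affIter p κ (N + 1) = p + κ * affIter p κ N := by
  unfold affIter
  rw [Function.iterate_succ_apply']

lemma cstep_iter_apply (φ ψ : C(K, ℝ)) (N : ℕ) (k : K) :
    (cstep φ ψ)^[N] 0 k = affIter (φ k * (1 - ψ k)) (φ k * ψ k + (1 - φ k) * (1 - ψ k)) N := by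
  induction N with
  | zero => simp [affIter_zero]
  | succ n ih =>
    rw [Function.iterate_succ_apply', affIter_succ, cstep_apply, ih]

lemma affIter_bounds {p q κ : ℝ} (hp : 0 ≤ p) (hq : 0 ≤ q) (hκ : 0 ≤ κ)
    (hsum : p + q + κ = 1) (N : ℕ) :
    0 ≤ affIter p κ N ∧ affIter p κ N ≤ 1 ∧ (p + q) * affIter p κ N ≤ p ∧
      p - (p + q) * affIter p κ N ≤ κ ^ N := by
  induction N with
  | zero =>
    rw [affIter_zero]
    refine ⟨le_rfl, zero_le_one, by simpa using hp, by simp; linarith⟩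
  | succ n ih =>
    obtain ⟨h0, h1, h2, h3⟩ := ih
    rw [affIter_succ]
    set u := affIter p κ n with hu
    have e1 : (p + q) * p + κ * p = p := by linear_combination p * hsum
    refine ⟨add_nonneg hp (mul_nonneg hκ h0), ?_, ?_, ?_⟩
    · have : κ * u ≤ κ := mul_le_of_le_one_right hκ h1
      linarith
    · have hmul : κ * ((p + q) * u) ≤ κ * p := mul_le_mul_of_nonneg_left h2 hκ
      nlinarith [hmul, e1]
    · have e2 : p - (p + q) * (p + κ * u) = κ * (p - (p + q) * u) := by
        linear_combination (-p) * hsum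
      rw [e2, pow_succ]
      calc κ * (p - (p + q) * u) ≤ κ * κ ^ n := mul_le_mul_of_nonneg_left h3 hκ
        _ = κ ^ n * κ := mul_comm _ _

lemma realg_iter_compl (M : ℕ) (t : ℝ) : realg^[M] (1 - t) = 1 - realg^[M] t := by
  induction M generalizing t with
  | zero => simp
  | succ n ih =>
    rw [Function.iterate_succ_apply, Function.iterate_succ_apply,
      show realg (1 - t) = 1 - realg t by unfold realg; ring, ih]

lemma realg_iter_small {η : ℝ} (hη0 : 0 < η) (hη2 : η ≤ 1 / 2) (M : ℕ) :
    ∀ t, 0 ≤ t → t ≤ 1 / 2 - η → realg^[M] t ≤ (1 - η) ^ M * t := by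
  induction M with
  | zero => intro t h0 h1; simp
  | succ n ih =>
    intro t h0 h1
    have key : (0:ℝ) ≤ (1 - t) * (1 - 2 * t) - η := by
      nlinarith [sq_nonneg (1 / 2 - η - t), mul_nonneg (by linarith : (0:ℝ) ≤ 1 / 2 - η - t) hη0.le,
        mul_pos hη0 hη0]
    have hg0 : 0 ≤ realg t := by unfold realg; nlinarith [sq_nonneg t, mul_nonneg (mul_nonneg h0 h0) h0]
    have hg1 : realg t ≤ (1 - η) * t := by unfold realg; nlinarith [mul_nonneg h0 key]
    have hg2 : realg t ≤ 1 / 2 - η := by nlinarith [mul_nonneg hη0.le h0]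
    rw [Function.iterate_succ_apply]
    calc realg^[n] (realg t) ≤ (1 - η) ^ n * realg t := ih _ hg0 hg2
      _ ≤ (1 - η) ^ n * ((1 - η) * t) :=
          mul_le_mul_of_nonneg_left hg1 (pow_nonneg (by linarith) n)
      _ = (1 - η) ^ (n + 1) * t := by ring

lemma region_hi {p q κ δ u : ℝ} (hp : 0 ≤ p) (hq : 0 ≤ q) (hκ : 0 ≤ κ)
    (hsum : p + q + κ = 1) (hδ0 : 0 < δ) (hδ2 : δ ≤ 1 / 2) (hpq : δ ≤ p - q)
    (hu1 : u ≤ 1) (hub : p - (p + q) * u ≤ δ ^ 2 / 4) : 1 / 2 + δ / 4 ≤ u := by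
  by_contra hcon
  push_neg at hcon
  have h1 : (p + q) * u ≤ (p + q) * (1 / 2 + δ / 4) :=
    mul_le_mul_of_nonneg_left hcon.le (add_nonneg hp hq)
  nlinarith [mul_le_mul_of_nonneg_left hδ2 hδ0.le, mul_nonneg hκ hδ0.le]

lemma region_lo {p q κ δ u : ℝ} (hp : 0 ≤ p) (hq : 0 ≤ q) (hκ : 0 ≤ κ)
    (hsum : p + q + κ = 1) (hδ0 : 0 < δ) (hδ2 : δ ≤ 1 / 2) (hqp : δ ≤ q - p)
    (hu0 : 0 ≤ u) (hua : (p + q) * u ≤ p) : u ≤ 1 / 2 - δ / 4 := by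
  by_contra hcon
  push_neg at hcon
  have h1 : (p + q) * (1 / 2 - δ / 4) ≤ (p + q) * u :=
    mul_le_mul_of_nonneg_left hcon.le (add_nonneg hp hq)
  nlinarith [mul_nonneg hκ hδ0.le]

lemma errA {x y c δ : ℝ} (hδ0 : 0 ≤ δ) (hy0 : 0 ≤ y) (hx1 : x ≤ 1) (hc1 : c ≤ 1)
    (hxy : δ ≤ x - y) (hcδ : 1 - c ≤ δ) : |max x y - (c * x + (1 - c) * y)| ≤ δ := by
  rw [max_eq_left (by linarith), abs_le]
  constructor
  · nlinarith [mul_nonneg (sub_nonneg.2 hc1) (show (0:ℝ) ≤ x - y by linarith)]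
  · nlinarith [mul_le_mul hcδ (show x - y ≤ 1 by linarith)
      (show (0:ℝ) ≤ x - y by linarith) hδ0]

lemma errB {x y c δ : ℝ} (hδ0 : 0 ≤ δ) (hx0 : 0 ≤ x) (hy1 : y ≤ 1) (hc0 : 0 ≤ c)
    (hyx : δ ≤ y - x) (hcδ : c ≤ δ) : |max x y - (c * x + (1 - c) * y)| ≤ δ := by
  rw [max_eq_right (by linarith), abs_le]
  constructor
  · nlinarith [mul_nonneg hc0 (show (0:ℝ) ≤ y - x by linarith)]
  · nlinarith [mul_le_mul hcδ (show y - x ≤ 1 by linarith)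
      (show (0:ℝ) ≤ y - x by linarith) hδ0]

lemma errC {x y c δ : ℝ} (hc0 : 0 ≤ c) (hc1 : c ≤ 1) (hb1 : x - y ≤ δ) (hb2 : y - x ≤ δ) :
    |max x y - (c * x + (1 - c) * y)| ≤ δ := by
  rcases le_total x y with h | h
  · rw [max_eq_right h, abs_le]
    constructor <;>
      nlinarith [mul_nonneg hc0 (sub_nonneg.2 h), mul_nonneg (sub_nonneg.2 hc1) (sub_nonneg.2 h)]
  · rw [max_eq_left h, abs_le]
    constructor <;>
      nlinarith [mul_nonneg hc0 (sub_nonneg.2 h), mul_nonneg (sub_nonneg.2 hc1) (sub_nonneg.2 h)]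

end ConvAux

theorem conv_sup_mem_closure {K : Type*} [TopologicalSpace K] [CompactSpace K] [T2Space K]
    (H : Set C(K, KC)) (hne : H.Nonempty) (φ ψ : C(K, ℝ))
    (hφ : φ ∈ Conv H) (hψ : ψ ∈ Conv H) :
    φ ⊔ ψ ∈ closure (Conv H) := by
  rw [Metric.mem_closure_iff]
  intro ε hε
  set δ : ℝ := min (ε / 2) (1 / 2) with hδdef
  have hδ0 : 0 < δ := lt_min (by linarith) (by norm_num)
  have hδ2 : δ ≤ 1 / 2 := min_le_right _ _
  have hδε : δ ≤ ε / 2 := min_le_left _ _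
  obtain ⟨N, hN⟩ := exists_pow_lt_of_lt_one (show (0:ℝ) < δ ^ 2 / 4 by positivity)
    (show 1 - δ < 1 by linarith)
  obtain ⟨M, hM⟩ := exists_pow_lt_of_lt_one hδ0 (show 1 - δ / 4 < 1 by linarith)
  set t : C(K, ℝ) := (cstep φ ψ)^[N] 0 with ht
  set χ : C(K, ℝ) := gstep^[M] t with hχdef
  have hχmem : χ ∈ Conv H := conv_gstep_iter (conv_cstep_iter hφ hψ N) M
  refine ⟨χ * φ + (1 - χ) * ψ, conv_mix hχmem hφ hψ, ?_⟩
  have key : ∀ k, dist ((φ ⊔ ψ) k) ((χ * φ + (1 - χ) * ψ) k) ≤ ε / 2 := by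
    intro k
    obtain ⟨hx0, hx1⟩ := hφ.1 k
    obtain ⟨hy0, hy1⟩ := hψ.1 k
    obtain ⟨hc0, hc1⟩ := hχmem.1 k
    have hcval : χ k = realg^[M]
        (affIter (φ k * (1 - ψ k)) (φ k * ψ k + (1 - φ k) * (1 - ψ k)) N) := by
      rw [hχdef, gstep_iter_apply, ht, cstep_iter_apply]
    set x := φ k
    set y := ψ k
    set c := χ k with hc
    set p : ℝ := x * (1 - y) with hpdef
    set q : ℝ := (1 - x) * y with hqdef
    set κ : ℝ := x * y + (1 - x) * (1 - y) with hκdef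
    have hp : 0 ≤ p := by rw [hpdef]; nlinarith
    have hq : 0 ≤ q := by rw [hqdef]; nlinarith
    have hκ : 0 ≤ κ := by rw [hκdef]; nlinarith
    have hsum : p + q + κ = 1 := by rw [hpdef, hqdef, hκdef]; ring
    have hpq : p - q = x - y := by rw [hpdef, hqdef]; ring
    obtain ⟨hu0, hu1, hua, hub⟩ := affIter_bounds hp hq hκ hsum N
    set u : ℝ := affIter p κ N with hu
    have hcu : c = realg^[M] u := hcval
    have hη0 : (0:ℝ) < δ / 4 := by linarith
    have hη2 : δ / 4 ≤ 1 / 2 := by linarith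
    have hpow : (0:ℝ) ≤ (1 - δ / 4) ^ M := pow_nonneg (by linarith) M
    rw [ContinuousMap.sup_apply, ContinuousMap.add_apply, ContinuousMap.mul_apply,
      ContinuousMap.mul_apply, ContinuousMap.sub_apply, ContinuousMap.one_apply,
      Real.dist_eq]
    have main : |max x y - (c * x + (1 - c) * y)| ≤ δ := by
      rcases le_or_gt δ (x - y) with h1 | h1
      · -- φ beats ψ by at least δ : c close to 1
        have hκle : κ ≤ 1 - δ := by linarith
        have hκN : κ ^ N ≤ (1 - δ) ^ N := pow_le_pow_left₀ hκ hκle N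
        have h2 : 1 / 2 + δ / 4 ≤ u :=
          region_hi hp hq hκ hsum hδ0 hδ2 (by linarith) hu1 (by linarith)
        have h3 : 1 - c ≤ δ := by
          have hcompl : realg^[M] (1 - u) = 1 - realg^[M] u := realg_iter_compl M u
          have hb := realg_iter_small hη0 hη2 M (1 - u) (by linarith) (by linarith)
          have h5 : (1 - δ / 4) ^ M * (1 - u) ≤ (1 - δ / 4) ^ M * 1 :=
            mul_le_mul_of_nonneg_left (by linarith) hpow
          rw [hcu]
          linarith [hM.le]
        exact errA hδ0.le hy0 hx1 hc1 h1 h3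
      · rcases le_or_gt δ (y - x) with h4 | h4
        · -- ψ beats φ by at least δ : c close to 0
          have h2 : u ≤ 1 / 2 - δ / 4 :=
            region_lo hp hq hκ hsum hδ0 hδ2 (by linarith) hu0 hua
          have h3 : c ≤ δ := by
            have hb := realg_iter_small hη0 hη2 M u hu0 h2
            have h5 : (1 - δ / 4) ^ M * u ≤ (1 - δ / 4) ^ M * 1 :=
              mul_le_mul_of_nonneg_left (by linarith) hpow
            rw [hcu]
            linarith [hM.le]
          exact errB hδ0.le hx0 hy1 hc0 h4 h3
        · exact errC hc0 hc1 (by linarith) (by linarith)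
    linarith
  calc dist (φ ⊔ ψ) (χ * φ + (1 - χ) * ψ) ≤ ε / 2 := (ContinuousMap.dist_le (by linarith)).2 key
    _ < ε := by linarith
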